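/- If X ~ Gamma(α, β) with shape α ≥ 2 and rate β > 0, then for every x > α/β, P(X ≥ x) ≤ exp(−2α·h(βx/α)), where h(t) = (t − 1 − log t)/2. -/

import Mathlib

open MeasureTheory ProbabilityTheory Set Real

/-- `h(t) = (1/2)(t - 1 - log t)`. -/
noncomputable def hFun (t : ℝ) : ℝ := (t - 1 - Real.log t) / 2

/-- Gamma upper tail bound (Harremoës): for `X ~ Gamma(a, b)` with shape `a ≥ 2` and
rate `b > 0`, for every `x > a/b`, `P(X ≥ x) ≤ exp(-2a·h(bx/a))`. -/
theorem gamma_tail_upper_bound (a b x : ℝ) (ha : 2 ≤ a) (hb : 0 < b) (hx : a / b < x) :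
    gammaMeasure a b (Set.Ici x) ≤ ENNReal.ofReal (Real.exp (-2 * a * hFun (b * x / a))) := by
  have ha0 : (0:ℝ) < a := by linarith
  have hx0 : 0 < x := lt_of_le_of_lt (by positivity) hx
  set s : ℝ := a / x with hs_def
  have hs0 : 0 < s := by positivity
  have hsb : s < b := by
    rw [hs_def, div_lt_iff₀ hx0]
    rw [div_lt_iff₀ hb] at hx
    linarith
  set K : ℝ := Real.exp (-2 * a * hFun (b * x / a)) with hK_def
  have hbs : b / s = b * x / a := by
    rw [hs_def]; field_simp
  have hbsa : (b / s) ^ a = Real.exp (a * Real.log (b * x / a)) := by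
    rw [hbs, Real.rpow_def_of_pos (by positivity)]
    ring_nf
  have hsx : s * x = a := by
    rw [hs_def]; field_simp
  have hK : K = (b / s) ^ a * Real.exp ((s - b) * x) := by
    rw [hK_def, hbsa, ← Real.exp_add, hFun]
    congr 1
    have : a * (b * x / a) = b * x := by field_simp
    nlinarith [this, hsx]
  -- pointwise bound on [x, ∞)
  have key : ∀ y ∈ Set.Ici x, gammaPDF a b y ≤ ENNReal.ofReal K * gammaPDF a s y := by
    intro y hy
    have hy0 : (0:ℝ) ≤ y := le_trans hx0.le hy
    rw [gammaPDF_of_nonneg hy0, gammaPDF_of_nonneg hy0, ← ENNReal.ofReal_mul (by positivity)]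
    apply ENNReal.ofReal_le_ofReal
    have hΓ : 0 < Real.Gamma a := Real.Gamma_pos_of_pos ha0
    have hb_split : b ^ a = (b / s) ^ a * s ^ a := by
      rw [← Real.mul_rpow (by positivity) (by positivity)]
      rw [div_mul_cancel₀ _ hs0.ne']
    have hexp : Real.exp (-(b * y)) ≤ Real.exp ((s - b) * x) * Real.exp (-(s * y)) := by
      rw [← Real.exp_add]
      apply Real.exp_le_exp.mpr
      nlinarith [mul_nonneg (sub_nonneg.mpr (le_of_lt hsb)) (sub_nonneg.mpr hy)]
    have hy1 : (0:ℝ) ≤ y ^ (a - 1) := Real.rpow_nonneg hy0 _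
    calc b ^ a / Real.Gamma a * y ^ (a - 1) * Real.exp (-(b * y))
        = (b / s) ^ a * (s ^ a / Real.Gamma a * y ^ (a - 1)) * Real.exp (-(b * y)) := by
          rw [hb_split]; ring
      _ ≤ (b / s) ^ a * (s ^ a / Real.Gamma a * y ^ (a - 1)) *
          (Real.exp ((s - b) * x) * Real.exp (-(s * y))) := by
          apply mul_le_mul_of_nonneg_left hexp
          positivity
      _ = K * (s ^ a / Real.Gamma a * y ^ (a - 1) * Real.exp (-(s * y))) := by
          rw [hK]; ring
  -- integrate
  have happly : gammaMeasure a b (Set.Ici x) = ∫⁻ y in Set.Ici x, gammaPDF a b y := by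
    rw [gammaMeasure, withDensity_apply _ measurableSet_Ici]
  rw [happly]
  calc ∫⁻ y in Set.Ici x, gammaPDF a b y
      ≤ ∫⁻ y in Set.Ici x, ENNReal.ofReal K * gammaPDF a s y :=
        setLIntegral_mono' measurableSet_Ici key
    _ = ENNReal.ofReal K * ∫⁻ y in Set.Ici x, gammaPDF a s y := by
        rw [lintegral_const_mul]
        exact (measurable_gammaPDFReal a s).ennreal_ofReal
    _ ≤ ENNReal.ofReal K * ∫⁻ y, gammaPDF a s y := by
        gcongr
        exact Measure.restrict_le_self
    _ = ENNReal.ofReal K := by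
        rw [lintegral_gammaPDF_eq_one ha0 hs0, mul_one]
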